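/- arXiv:0706.1940 — 5 statements merged into one kernel-verified Lean document; each statement's English description precedes it below -/
import Mathlib

section
/- For any 2×2 real non-singular matrix G, there exists an orthogonal matrix C with entries in {0, ±1} having exactly one nonzero entry in each row and column, such that all eigenvalues of the product CG have negative real parts. -/
open Matrix

/-- A signed permutation matrix: orthogonal, entries in {0, 1, -1},
exactly one nonzero entry in each row and each column. -/
def IsSignedPerm {n : ℕ} (C : Matrix (Fin n) (Fin n) ℝ) : Prop :=
  Cᵀ * C = 1 ∧ (∀ i j, C i j = 0 ∨ C i j = 1 ∨ C i j = -1) ∧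
    (∀ i, ∃! j, C i j ≠ 0) ∧ (∀ j, ∃! i, C i j ≠ 0)

private lemma key (A : Matrix (Fin 2) (Fin 2) ℝ) (ht : A.trace < 0) (hd : 0 < A.det) :
    ∀ μ ∈ spectrum ℂ (A.map Complex.ofReal), μ.re < 0 := by
  intro μ hμ
  rw [spectrum.mem_iff, Matrix.isUnit_iff_isUnit_det, isUnit_iff_ne_zero] at hμ
  push_neg at hμ
  rw [Matrix.det_fin_two] at hμ
  simp [Matrix.algebraMap_matrix_apply] at hμ
  rw [Matrix.trace_fin_two] at ht
  rw [Matrix.det_fin_two] at hd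
  set a := A 0 0; set b := A 0 1; set c := A 1 0; set d := A 1 1
  rw [Complex.ext_iff] at hμ
  obtain ⟨h1, h2⟩ := hμ
  simp [Complex.sub_re, Complex.mul_re, Complex.mul_im] at h1 h2
  by_contra hx
  push_neg at hx
  rcases eq_or_ne μ.im 0 with hy | hy
  · rw [hy] at h1
    nlinarith
  · have h3 : (μ.re - a + (μ.re - d)) * μ.im = 0 := by linear_combination h2
    rcases mul_eq_zero.mp h3 with h4 | h4
    · nlinarith
    · exact absurd h4 hy

private lemma spDiag (e f : ℝ) (he : e = 1 ∨ e = -1) (hf : f = 1 ∨ f = -1) :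
    IsSignedPerm !![e, 0; 0, f] := by
  refine ⟨?_, ?_, ?_, ?_⟩
  · ext i j; fin_cases i <;> fin_cases j <;> rcases he with he | he <;> rcases hf with hf | hf <;>
      simp [Matrix.mul_apply, Fin.sum_univ_two, Matrix.transpose_apply, Matrix.vecHead,
        Matrix.vecTail, he, hf]
  · intro i j; fin_cases i <;> fin_cases j <;> simp [he, hf]
  · intro i; fin_cases i
    · exact ⟨0, by rcases he with h | h <;> simp [h],
        by intro j hj; fin_cases j <;> simp_all⟩
    · exact ⟨1, by rcases hf with h | h <;> simp [h],
        by intro j hj; fin_cases j <;> simp_all⟩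
  · intro j; fin_cases j
    · exact ⟨0, by rcases he with h | h <;> simp [h],
        by intro i hi; fin_cases i <;> simp_all⟩
    · exact ⟨1, by rcases hf with h | h <;> simp [h],
        by intro i hi; fin_cases i <;> simp_all⟩

private lemma spAnti (e f : ℝ) (he : e = 1 ∨ e = -1) (hf : f = 1 ∨ f = -1) :
    IsSignedPerm !![0, e; f, 0] := by
  refine ⟨?_, ?_, ?_, ?_⟩
  · ext i j; fin_cases i <;> fin_cases j <;> rcases he with he | he <;> rcases hf with hf | hf <;>
      simp [Matrix.mul_apply, Fin.sum_univ_two, Matrix.transpose_apply, Matrix.vecHead,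
        Matrix.vecTail, he, hf]
  · intro i j; fin_cases i <;> fin_cases j <;> simp [he, hf]
  · intro i; fin_cases i
    · exact ⟨1, by rcases he with h | h <;> simp [h],
        by intro j hj; fin_cases j <;> simp_all⟩
    · exact ⟨0, by rcases hf with h | h <;> simp [h],
        by intro j hj; fin_cases j <;> simp_all⟩
  · intro j; fin_cases j
    · exact ⟨1, by rcases hf with h | h <;> simp [h],
        by intro i hi; fin_cases i <;> simp_all⟩
    · exact ⟨0, by rcases he with h | h <;> simp [h],
        by intro i hi; fin_cases i <;> simp_all⟩

theorem stmt0 (G : Matrix (Fin 2) (Fin 2) ℝ) (hG : G.det ≠ 0) :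
    ∃ C : Matrix (Fin 2) (Fin 2) ℝ, IsSignedPerm C ∧
      ∀ μ ∈ spectrum ℂ ((C * G).map (Complex.ofReal)), μ.re < 0 := by
  have hdetG : G.det = G 0 0 * G 1 1 - G 0 1 * G 1 0 := Matrix.det_fin_two G
  rcases hG.lt_or_gt with hΔ | hΔ
  · -- det G < 0 : use a reflection
    rcases lt_trichotomy (G 0 0 - G 1 1) 0 with ht | ht | ht
    · refine ⟨!![1, 0; 0, -1], spDiag 1 (-1) (Or.inl rfl) (Or.inr rfl), key _ ?_ ?_⟩
      · simp [Matrix.trace_fin_two, Matrix.mul_apply, Matrix.vecMul, dotProduct, Fin.sum_univ_two]; linarith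
      · rw [Matrix.det_mul, Matrix.det_fin_two_of]; nlinarith
    · rcases lt_trichotomy (G 0 1 + G 1 0) 0 with hb | hb | hb
      · refine ⟨!![0, 1; 1, 0], spAnti 1 1 (Or.inl rfl) (Or.inl rfl), key _ ?_ ?_⟩
        · simp [Matrix.trace_fin_two, Matrix.mul_apply, Matrix.vecMul, dotProduct, Fin.sum_univ_two]; linarith
        · rw [Matrix.det_mul, Matrix.det_fin_two_of]; nlinarith
      · exfalso
        have hd1 : G 1 1 = G 0 0 := by linarith
        have hc : G 1 0 = -G 0 1 := by linarith
        rw [hdetG, hd1, hc] at hΔ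
        nlinarith [sq_nonneg (G 0 0), sq_nonneg (G 0 1)]
      · refine ⟨!![0, -1; -1, 0], spAnti (-1) (-1) (Or.inr rfl) (Or.inr rfl), key _ ?_ ?_⟩
        · simp [Matrix.trace_fin_two, Matrix.mul_apply, Matrix.vecMul, dotProduct, Fin.sum_univ_two]; linarith
        · rw [Matrix.det_mul, Matrix.det_fin_two_of]; nlinarith
    · refine ⟨!![-1, 0; 0, 1], spDiag (-1) 1 (Or.inr rfl) (Or.inl rfl), key _ ?_ ?_⟩
      · simp [Matrix.trace_fin_two, Matrix.mul_apply, Matrix.vecMul, dotProduct, Fin.sum_univ_two]; linarith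
      · rw [Matrix.det_mul, Matrix.det_fin_two_of]; nlinarith
  · -- det G > 0 : use a rotation
    rcases lt_trichotomy (G 0 0 + G 1 1) 0 with ht | ht | ht
    · refine ⟨!![1, 0; 0, 1], spDiag 1 1 (Or.inl rfl) (Or.inl rfl), key _ ?_ ?_⟩
      · simp [Matrix.trace_fin_two, Matrix.mul_apply, Matrix.vecMul, dotProduct, Fin.sum_univ_two]; linarith
      · rw [Matrix.det_mul, Matrix.det_fin_two_of]; nlinarith
    · rcases lt_trichotomy (G 0 1 - G 1 0) 0 with hb | hb | hb
      · refine ⟨!![0, -1; 1, 0], spAnti (-1) 1 (Or.inr rfl) (Or.inl rfl), key _ ?_ ?_⟩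
        · simp [Matrix.trace_fin_two, Matrix.mul_apply, Matrix.vecMul, dotProduct, Fin.sum_univ_two]; linarith
        · rw [Matrix.det_mul, Matrix.det_fin_two_of]; nlinarith
      · exfalso
        have hd1 : G 1 1 = -G 0 0 := by linarith
        have hc : G 1 0 = G 0 1 := by linarith
        rw [hdetG, hd1, hc] at hΔ
        nlinarith [sq_nonneg (G 0 0), sq_nonneg (G 0 1)]
      · refine ⟨!![0, 1; -1, 0], spAnti 1 (-1) (Or.inl rfl) (Or.inr rfl), key _ ?_ ?_⟩
        · simp [Matrix.trace_fin_two, Matrix.mul_apply, Matrix.vecMul, dotProduct, Fin.sum_univ_two]; linarith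
        · rw [Matrix.det_mul, Matrix.det_fin_two_of]; nlinarith
    · refine ⟨!![-1, 0; 0, -1], spDiag (-1) (-1) (Or.inr rfl) (Or.inr rfl), key _ ?_ ?_⟩
      · simp [Matrix.trace_fin_two, Matrix.mul_apply, Matrix.vecMul, dotProduct, Fin.sum_univ_two]; linarith
      · rw [Matrix.det_mul, Matrix.det_fin_two_of]; nlinarith
end

section
/- Let G be a 2×2 real matrix with det G > 0, and let C_{1,α} be the rotation matrix with rows (cos α, sin α) and (−sin α, cos α). Define θ ∈ (−π, π] by tan θ = (G₁₂ − G₂₁)/(−G₁₁ − G₂₂) (with the signs of numerator and denominator determining the quadrant). If |α − θ| < π/2, then both eigenvalues of C_{1,α}G have negative real parts. -/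
open Matrix Real

theorem stmt3 (G : Matrix (Fin 2) (Fin 2) ℝ) (hdet : 0 < G.det) (α θ : ℝ)
    (hθ : θ = Complex.arg ⟨-G 0 0 - G 1 1, G 0 1 - G 1 0⟩)
    (hα : |α - θ| < π / 2) :
    ∀ μ ∈ spectrum ℂ
      ((!![Real.cos α, Real.sin α; -Real.sin α, Real.cos α] * G).map Complex.ofReal),
      μ.re < 0 := by
  intro μ hμ
  set a := G 0 0 with ha
  set b := G 0 1 with hb
  set c := G 1 0 with hc
  set d := G 1 1 with hd
  have hG : G.det = a * d - b * c := Matrix.det_fin_two G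
  set z : ℂ := ⟨-a - d, b - c⟩ with hz
  have hz0 : z ≠ 0 := by
    intro h
    have h1 : -a - d = 0 := congrArg Complex.re h
    have h2 : b - c = 0 := congrArg Complex.im h
    rw [hG] at hdet
    have e1 : a * d = -a * a := by have hd2 : d = -a := by linarith
                                   rw [hd2]; ring
    have e2 : b * c = b * b := by have hc2 : c = b := by linarith
                                  rw [hc2]
    rw [e1, e2] at hdet
    nlinarith [sq_nonneg a, sq_nonneg b]
  have habs : 0 < ‖z‖ := by
    simpa using norm_pos_iff.mpr hz0
  have hcosθ : Real.cos θ = (-a - d) / ‖z‖ := by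
    rw [hθ]; exact Complex.cos_arg hz0
  have hsinθ : Real.sin θ = (b - c) / ‖z‖ := by
    rw [hθ]; exact Complex.sin_arg z
  have hcosαθ : 0 < Real.cos (α - θ) := by
    apply Real.cos_pos_of_mem_Ioo
    constructor
    · linarith [abs_lt.mp hα |>.1]
    · linarith [abs_lt.mp hα |>.2]
  set t : ℝ := Real.cos α * (a + d) + Real.sin α * (c - b) with htdef
  have ht : t < 0 := by
    have : t = -(‖z‖ * Real.cos (α - θ)) := by
      rw [htdef, Real.cos_sub, hcosθ, hsinθ]
      field_simp
      ring
    rw [this]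
    nlinarith [mul_pos habs hcosαθ]
  -- extract the characteristic equation
  rw [spectrum.mem_iff] at hμ
  have hdet0 : (algebraMap ℂ (Matrix (Fin 2) (Fin 2) ℂ) μ -
      (!![Real.cos α, Real.sin α; -Real.sin α, Real.cos α] * G).map Complex.ofReal).det = 0 := by
    by_contra h
    exact hμ ((Matrix.isUnit_iff_isUnit_det _).mpr (isUnit_iff_ne_zero.mpr h))
  have hquad : μ ^ 2 - (t : ℂ) * μ + ((a * d - b * c : ℝ) : ℂ) = 0 := by
    rw [Matrix.det_fin_two] at hdet0
    simp only [Matrix.sub_apply, Matrix.map_apply, Matrix.mul_apply, Fin.sum_univ_two,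
      Matrix.algebraMap_matrix_apply, Matrix.cons_val', Matrix.cons_val_zero, Matrix.cons_val_one,
      Matrix.head_cons, Matrix.empty_val', Matrix.cons_val_fin_one, Matrix.head_fin_const,
      if_true, if_pos rfl] at hdet0
    rw [← hdet0]
    push_cast
    norm_num
    have htC : (t : ℂ) = Complex.cos α * (a + d) + Complex.sin α * (c - b) := by
      rw [htdef]; push_cast; ring
    linear_combination -μ * htC - ((a:ℂ) * d - b * c) * Complex.sin_sq_add_cos_sq (α:ℂ)
  -- now the quadratic argument
  set x := μ.re with hx
  set y := μ.im with hy
  have hre : x ^ 2 - y ^ 2 - t * x + (a * d - b * c) = 0 := by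
    have := congrArg Complex.re hquad
    simpa [Complex.ext_iff, pow_two, Complex.mul_re, Complex.mul_im, ← hx, ← hy] using this
  have him : y * (2 * x - t) = 0 := by
    have := congrArg Complex.im hquad
    simp [Complex.ext_iff, pow_two, Complex.mul_re, Complex.mul_im, ← hx, ← hy] at this
    linarith [this]
  have hdetpos : 0 < a * d - b * c := by rw [hG] at hdet; exact hdet
  rcases mul_eq_zero.mp him with hy0 | hxt
  · -- y = 0, μ real
    rw [hy0] at hre
    by_contra hxn
    push_neg at hxn
    nlinarith
  · -- 2x = t
    have : x = t / 2 := by linarith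
    rw [this]
    linarith
end

section
/- Let G be a 2×2 real matrix with det G < 0, and let C_{−1,α} be the matrix with rows (−cos α, sin α) and (sin α, cos α). Define θ ∈ (−π, π] by tan θ = (−G₁₂ − G₂₁)/(G₁₁ − G₂₂) (with signs of numerator and denominator determining the quadrant). If |α − θ| < π/2, then both eigenvalues of C_{−1,α}G have negative real parts. -/
open Matrix Real

lemma quad_re_neg (t d : ℝ) (ht : t < 0) (hd : 0 < d) (μ : ℂ)
    (h : μ^2 - (t:ℂ)*μ + d = 0) : μ.re < 0 := by
  have him := congrArg Complex.im h
  have hre := congrArg Complex.re h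
  simp [pow_two, Complex.mul_re, Complex.mul_im] at him hre
  set x := μ.re; set y := μ.im
  by_contra hx
  push_neg at hx
  have hy : y = 0 := by
    have h3 : y * (2*x - t) = 0 := by linear_combination him
    rcases mul_eq_zero.1 h3 with h | h
    · exact h
    · linarith
  rw [hy] at hre
  nlinarith [hre, sq_nonneg x]

theorem stmt4 (G : Matrix (Fin 2) (Fin 2) ℝ) (hdet : G.det < 0) (α θ : ℝ)
    (hθ : θ = Complex.arg ⟨G 0 0 - G 1 1, -G 0 1 - G 1 0⟩)
    (hα : |α - θ| < π / 2) :
    ∀ μ ∈ spectrum ℂ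
      ((!![-Real.cos α, Real.sin α; Real.sin α, Real.cos α] * G).map Complex.ofReal),
      μ.re < 0 := by
  intro μ hμ
  have hGdet : G.det = G 0 0 * G 1 1 - G 0 1 * G 1 0 := Matrix.det_fin_two G
  set z : ℂ := ⟨G 0 0 - G 1 1, -G 0 1 - G 1 0⟩ with hz
  have hzre : z.re = G 0 0 - G 1 1 := rfl
  have hzim : z.im = -G 0 1 - G 1 0 := rfl
  have hzne : z ≠ 0 := by
    intro h
    rw [Complex.ext_iff] at h
    rw [hzre, hzim] at h
    have e1 : G 1 1 = G 0 0 := by have := h.1; simp at this; linarith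
    have e2 : G 0 1 = -G 1 0 := by have := h.2; simp at this; linarith
    rw [hGdet, e1, e2] at hdet
    nlinarith [sq_nonneg (G 0 0), sq_nonneg (G 1 0)]
  have hr : 0 < ‖z‖ := norm_pos_iff.mpr hzne
  have hcosθ : Real.cos θ = z.re / ‖z‖ := by rw [hθ]; exact Complex.cos_arg hzne
  have hsinθ : Real.sin θ = z.im / ‖z‖ := by rw [hθ]; exact Complex.sin_arg z
  have hcospos : 0 < Real.cos (α - θ) := by
    rw [abs_lt] at hα
    exact Real.cos_pos_of_mem_Ioo ⟨hα.1, hα.2⟩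
  set t : ℝ := (-Real.cos α * G 0 0 + Real.sin α * G 1 0) + (Real.sin α * G 0 1 + Real.cos α * G 1 1) with ht
  have htneg : t < 0 := by
    have key : ‖z‖ * Real.cos (α - θ)
        = Real.cos α * (G 0 0 - G 1 1) + Real.sin α * (-G 0 1 - G 1 0) := by
      rw [Real.cos_sub, hcosθ, hsinθ, hzre, hzim]
      field_simp
    have : t = -(‖z‖ * Real.cos (α - θ)) := by rw [key, ht]; ring
    rw [this]
    nlinarith
  set d : ℝ := (-Real.cos α * G 0 0 + Real.sin α * G 1 0) * (Real.sin α * G 0 1 + Real.cos α * G 1 1)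
      - (-Real.cos α * G 0 1 + Real.sin α * G 1 1) * (Real.sin α * G 0 0 + Real.cos α * G 1 0) with hd
  have hdpos : 0 < d := by
    have h1 : d = -G.det := by
      rw [hd, hGdet]
      nlinarith [Real.sin_sq_add_cos_sq α]
    rw [h1]; linarith
  rw [spectrum.mem_iff, Matrix.isUnit_iff_isUnit_det, isUnit_iff_ne_zero, not_not] at hμ
  rw [Matrix.det_fin_two] at hμ
  simp [Matrix.sub_apply, Matrix.algebraMap_matrix_apply, Matrix.map_apply, Matrix.mul_apply,
    Matrix.vecMul, dotProduct, Fin.sum_univ_two] at hμ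
  apply quad_re_neg t d htneg hdpos
  rw [ht, hd]
  push_cast
  linear_combination hμ
end

section
/- Let G be a 2×2 real non-singular matrix with polar decomposition G = QB, where Q is orthogonal and B is symmetric positive definite. Let C be the unique matrix of the form C_{s,θ} (rows (s cos θ, sin θ), (−s sin θ, cos θ)) with s = sign(det G) and θ defined by tan θ = (sG₁₂ − G₂₁)/(−sG₁₁ − G₂₂) in (−π, π]. Then C = −Qᵀ, and consequently CG = −B is symmetric negative definite. -/
open Matrix Real

theorem stmt5 (G Q B : Matrix (Fin 2) (Fin 2) ℝ) (hdet : G.det ≠ 0)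
    (hQ : Qᵀ * Q = 1) (hB : B.PosDef) (hGQB : G = Q * B)
    (s : ℝ) (hs : s = if 0 < G.det then 1 else -1)
    (θ : ℝ) (hθ : θ = Complex.arg ⟨-s * G 0 0 - G 1 1, s * G 0 1 - G 1 0⟩)
    (C : Matrix (Fin 2) (Fin 2) ℝ)
    (hC : C = !![s * Real.cos θ, Real.sin θ; -s * Real.sin θ, Real.cos θ]) :
    C = -Qᵀ ∧ C * G = -B := by
  have hBsym : B 1 0 = B 0 1 := by
    have h := congrFun (congrFun hB.1 0) 1
    simpa [Matrix.conjTranspose_apply] using h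
  have hpp : 0 < B 0 0 := by
    have := hB.dotProduct_mulVec_pos (x := Pi.single (0 : Fin 2) (1 : ℝ)) (by
      intro h; have := congrFun h 0; simp at this)
    simpa [Matrix.mulVec, dotProduct, Fin.sum_univ_two] using this
  have hrr : 0 < B 1 1 := by
    have := hB.dotProduct_mulVec_pos (x := Pi.single (1 : Fin 2) (1 : ℝ)) (by
      intro h; have := congrFun h 1; simp at this)
    simpa [Matrix.mulVec, dotProduct, Fin.sum_univ_two] using this
  have htpos : 0 < B 0 0 + B 1 1 := by linarith
  have e00 := congrFun (congrFun hQ 0) 0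
  have e01 := congrFun (congrFun hQ 0) 1
  simp [Matrix.mul_apply, Fin.sum_univ_two, Matrix.transpose_apply,
    Matrix.one_apply] at e00 e01
  have hdetQmul : Q.det * Q.det = 1 := by
    have h := congrArg Matrix.det hQ
    simpa [Matrix.det_mul, Matrix.det_transpose] using h
  have hdetQ : Q.det = Q 0 0 * Q 1 1 - Q 0 1 * Q 1 0 := by
    simp [Matrix.det_fin_two]
  have hdb : Q 1 1 = Q 0 0 * Q.det := by
    rw [hdetQ]; linear_combination (-(Q 1 1)) * e00 + Q 1 0 * e01
  have hbb : Q 0 1 = -(Q 1 0) * Q.det := by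
    rw [hdetQ]; linear_combination (-(Q 0 1)) * e00 + Q 0 0 * e01
  have hdetG : G.det = Q.det * B.det := by rw [hGQB, Matrix.det_mul]
  have hBdet : 0 < B.det := hB.det_pos
  have hse : s = Q.det := by
    rcases mul_self_eq_one_iff.mp hdetQmul with h | h
    · have h2 : 0 < G.det := by rw [hdetG, h]; linarith
      rw [hs, if_pos h2, h]
    · have h2 : ¬ (0 < G.det) := by rw [hdetG, h]; push_neg; nlinarith
      rw [hs, if_neg h2, h]
  have hs2 : s * s = 1 := by rw [hse]; exact hdetQmul
  -- entries of G
  have g00 : G 0 0 = Q 0 0 * B 0 0 + Q 0 1 * B 0 1 := by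
    rw [hGQB, Matrix.mul_apply, Fin.sum_univ_two, hBsym]
  have g01 : G 0 1 = Q 0 0 * B 0 1 + Q 0 1 * B 1 1 := by
    rw [hGQB, Matrix.mul_apply, Fin.sum_univ_two]
  have g10 : G 1 0 = Q 1 0 * B 0 0 + Q 1 1 * B 0 1 := by
    rw [hGQB, Matrix.mul_apply, Fin.sum_univ_two, hBsym]
  have g11 : G 1 1 = Q 1 0 * B 0 1 + Q 1 1 * B 1 1 := by
    rw [hGQB, Matrix.mul_apply, Fin.sum_univ_two]
  have hre : -s * G 0 0 - G 1 1 = -(s * Q 0 0) * (B 0 0 + B 1 1) := by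
    rw [g00, g11, hbb, hdb, ← hse]
    linear_combination (Q 1 0 * B 0 1) * hs2
  have him : s * G 0 1 - G 1 0 = -(Q 1 0) * (B 0 0 + B 1 1) := by
    rw [g01, g10, hbb, hdb, ← hse]
    linear_combination (-(Q 1 0) * B 1 1) * hs2
  set z : ℂ := ⟨-s * G 0 0 - G 1 1, s * G 0 1 - G 1 0⟩ with hz
  have hzre : z.re = -(s * Q 0 0) * (B 0 0 + B 1 1) := hre
  have hzim : z.im = -(Q 1 0) * (B 0 0 + B 1 1) := him
  have hac : Q 0 0 * Q 0 0 + Q 1 0 * Q 1 0 = 1 := e00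
  have habs : ‖z‖ = B 0 0 + B 1 1 := by
    rw [Complex.norm_def, Complex.normSq_apply, hzre, hzim]
    rw [show -(s * Q 0 0) * (B 0 0 + B 1 1) * (-(s * Q 0 0) * (B 0 0 + B 1 1)) +
        -(Q 1 0) * (B 0 0 + B 1 1) * (-(Q 1 0) * (B 0 0 + B 1 1)) = (B 0 0 + B 1 1) ^ 2 by
      linear_combination ((B 0 0 + B 1 1)^2 * (Q 0 0 * Q 0 0)) * hs2 + ((B 0 0 + B 1 1)^2) * hac]
    exact Real.sqrt_sq htpos.le
  have hzne : z ≠ 0 := by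
    intro h
    rw [h] at habs
    simp at habs
    linarith
  have hcos : Real.cos θ = -(s * Q 0 0) := by
    rw [hθ, Complex.cos_arg hzne, hzre, habs]
    field_simp
  have hsin : Real.sin θ = -(Q 1 0) := by
    rw [hθ, Complex.sin_arg, hzim, habs]
    field_simp
  have h1 : s * Real.cos θ = -(Q 0 0) := by
    rw [hcos]; linear_combination (-(Q 0 0)) * hs2
  have h2 : Real.sin θ = -(Q 1 0) := hsin
  have h3 : -s * Real.sin θ = -(Q 0 1) := by
    rw [hsin, hbb, ← hse]; ring
  have h4 : Real.cos θ = -(Q 1 1) := by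
    rw [hcos, hdb, ← hse]; ring
  have hCQ : C = -Qᵀ := by
    rw [hC]
    ext i j
    fin_cases i <;> fin_cases j <;>
      simp only [Matrix.cons_val', Matrix.cons_val_zero, Matrix.cons_val_one, Matrix.head_cons,
        Matrix.empty_val', Matrix.cons_val_fin_one, Matrix.head_fin_const,
        Matrix.neg_apply, Matrix.transpose_apply, Fin.isValue]
    · exact h1
    · exact h2
    · exact h3
    · exact h4
  refine ⟨hCQ, ?_⟩
  rw [hCQ, hGQB, Matrix.neg_mul, ← Matrix.mul_assoc, hQ, Matrix.one_mul]
end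

section
/- Let B be an n×n real symmetric positive definite matrix and Q an n×n real orthogonal matrix all of whose eigenvalues have positive real parts. Then all eigenvalues of the product QB have positive real parts. -/
open Matrix ComplexOrder

lemma aux_memspec {m : ℕ} (M : Matrix (Fin m) (Fin m) ℂ) (μ : ℂ) :
    μ ∈ spectrum ℂ M ↔ ∃ v, v ≠ 0 ∧ M *ᵥ v = μ • v := by
  rw [← AlgEquiv.spectrum_eq (Matrix.toLinAlgEquiv' (n := Fin m) (R := ℂ)),
    ← Module.End.hasEigenvalue_iff_mem_spectrum]
  constructor
  · intro h
    obtain ⟨v, hv⟩ := h.exists_hasEigenvector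
    exact ⟨v, hv.2, by simpa [Matrix.toLinAlgEquiv'_apply] using hv.apply_eq_smul⟩
  · rintro ⟨v, hv0, hv⟩
    apply Module.End.hasEigenvalue_of_hasEigenvector (x := v)
    refine ⟨Module.End.mem_eigenspace_iff.mpr ?_, hv0⟩
    simpa [Matrix.toLinAlgEquiv'_apply] using hv

lemma aux_circle {m : ℕ} {QC : Matrix (Fin m) (Fin m) ℂ} (hQ1 : QCᴴ * QC = 1)
    {l : ℂ} {w : Fin m → ℂ} (hw : w ≠ 0) (hvw : QC *ᵥ w = l • w) :
    (starRingEnd ℂ) l * l = 1 := by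
  have key : star w ⬝ᵥ w = ((starRingEnd ℂ) l * l) * (star w ⬝ᵥ w) := by
    calc star w ⬝ᵥ w = star w ⬝ᵥ (QCᴴ * QC) *ᵥ w := by rw [hQ1, one_mulVec]
    _ = star (QC *ᵥ w) ⬝ᵥ (QC *ᵥ w) := by
        rw [← mulVec_mulVec, dotProduct_mulVec, star_mulVec]
    _ = ((starRingEnd ℂ) l * l) * (star w ⬝ᵥ w) := by
        rw [hvw]
        simp only [star_smul, smul_dotProduct, dotProduct_smul, smul_eq_mul, Pi.star_apply,
          RCLike.star_def]
        ring
  have hd : star w ⬝ᵥ w ≠ 0 := fun h => hw (dotProduct_star_self_eq_zero.mp h)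
  have := key.symm
  field_simp at this
  exact this

lemma aux_posDefA {m : ℕ} {A : Matrix (Fin m) (Fin m) ℂ} (h : A.PosSemidef)
    (hu : IsUnit A) : A.PosDef := by
  refine Matrix.PosDef.of_dotProduct_mulVec_pos h.1 fun x hx =>
    (h.dotProduct_mulVec_nonneg x).lt_of_ne' fun h0 => hx ?_
  have hAx : A *ᵥ x = 0 := (h.dotProduct_mulVec_zero_iff x).mp h0
  exact Matrix.mulVec_injective_iff_isUnit.mpr hu (a₁ := x) (a₂ := 0) (by simpa using hAx)

lemma aux_posDefB {m : ℕ} {B : Matrix (Fin m) (Fin m) ℝ} (hB : B.PosDef) :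
    (B.map Complex.ofReal).PosDef := by
  obtain ⟨C, hC⟩ : ∃ C : Matrix (Fin m) (Fin m) ℝ, B = Cᵀ * C := by
    open scoped MatrixOrder in
    obtain ⟨C, hC⟩ := CStarAlgebra.nonneg_iff_eq_star_mul_self.mp hB.posSemidef.nonneg
    exact ⟨C, by simpa [Matrix.star_eq_conjTranspose] using hC⟩
  have hco : ⇑Complex.ofRealHom = Complex.ofReal := rfl
  apply aux_posDefA
  · have : B.map Complex.ofReal = (C.map Complex.ofReal)ᴴ * (C.map Complex.ofReal) := by
      rw [hC, ← hco, Matrix.map_mul]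
      congr 1
      ext i j
      simp [conjTranspose_apply]
    rw [this]
    exact Matrix.posSemidef_conjTranspose_mul_self _
  · rw [Matrix.isUnit_iff_isUnit_det]
    have : (B.map Complex.ofReal).det = (Complex.ofReal B.det) := by
      rw [← hco]
      exact (RingHom.map_det Complex.ofRealHom B).symm
    rw [this]
    exact (Complex.ofReal_ne_zero.mpr hB.det_pos.ne').isUnit

lemma aux_posDefC {m : ℕ} {A : Matrix (Fin m) (Fin m) ℂ} (hA : A.IsHermitian)
    (hpos : ∀ i, 0 < hA.eigenvalues i) : A.PosDef := by
  apply aux_posDefA (hA.posSemidef_iff_eigenvalues_nonneg.mpr fun i => (hpos i).le)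
  rw [Matrix.isUnit_iff_isUnit_det, hA.det_eq_prod_eigenvalues]
  refine (Finset.prod_ne_zero_iff.mpr fun i _ => ?_).isUnit
  exact Complex.ofReal_ne_zero.mpr (hpos i).ne'

lemma aux_eigHC {m : ℕ} {QC : Matrix (Fin m) (Fin m) ℂ} (hQ1 : QCᴴ * QC = 1)
    (hQ2 : QC * QCᴴ = 1) (hQspec : ∀ μ ∈ spectrum ℂ QC, 0 < μ.re)
    {α : ℝ} {w : Fin m → ℂ} (hw : w ≠ 0)
    (hHw : ((2:ℂ)⁻¹ • (QC + QCᴴ)) *ᵥ w = (α:ℂ) • w) : 0 < α := by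
  have main : ∀ l : ℂ, (∃ v, v ≠ 0 ∧ QC *ᵥ v = l • v) → l * l - (2*α) * l + 1 = 0 → 0 < α := by
    rintro l ⟨v, hv0, hv⟩ hpoly
    have hre := hQspec l ((aux_memspec _ _).mpr ⟨v, hv0, hv⟩)
    have hcirc := aux_circle hQ1 hv0 hv
    have hlne : l ≠ 0 := by
      rintro rfl
      simp at hcirc
    have h2 : (2*(α:ℂ)) * l = (l + (starRingEnd ℂ) l) * l := by
      linear_combination - hpoly - hcirc
    have h3 : (2*(α:ℂ)) = l + (starRingEnd ℂ) l := mul_right_cancel₀ hlne h2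
    rw [Complex.add_conj] at h3
    have : (2:ℝ) * α = 2 * l.re := by exact_mod_cast h3
    linarith
  have hsum : (QC + QCᴴ) *ᵥ w = (2*(α:ℂ)) • w := by
    have h := hHw
    rw [smul_mulVec] at h
    calc (QC + QCᴴ) *ᵥ w = (2:ℂ) • ((2:ℂ)⁻¹ • ((QC + QCᴴ) *ᵥ w)) := by
          rw [smul_smul]; norm_num
    _ = (2:ℂ) • ((α:ℂ) • w) := by rw [h]
    _ = (2*(α:ℂ)) • w := by rw [smul_smul]
  have key : (QC * QC) *ᵥ w = (2*(α:ℂ)) • (QC *ᵥ w) - w := by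
    have h1 : QC *ᵥ ((QC + QCᴴ) *ᵥ w) = (2*(α:ℂ)) • (QC *ᵥ w) := by
      rw [hsum, mulVec_smul]
    have h2 : QC *ᵥ ((QC + QCᴴ) *ᵥ w) = (QC * QC) *ᵥ w + w := by
      rw [mulVec_mulVec, mul_add, hQ2, add_mulVec, one_mulVec]
    rw [h2] at h1
    rw [eq_sub_iff_add_eq, h1]
  obtain ⟨s, hs⟩ := IsAlgClosed.exists_pow_nat_eq ((α:ℂ)^2 - 1) (n := 2) (by norm_num)
  set l₁ : ℂ := α + s with hl₁
  set l₂ : ℂ := α - s with hl₂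
  have hprod : l₁ * l₂ = 1 := by
    rw [hl₁, hl₂]
    linear_combination -hs
  have hpoly1 : l₁ * l₁ - (2*α) * l₁ + 1 = 0 := by
    rw [hl₁]; linear_combination hs
  have hpoly2 : l₂ * l₂ - (2*α) * l₂ + 1 = 0 := by
    rw [hl₂]; linear_combination hs
  by_cases hu : QC *ᵥ w - l₂ • w = 0
  · exact main l₂ ⟨w, hw, by rwa [sub_eq_zero] at hu⟩ hpoly2
  · refine main l₁ ⟨QC *ᵥ w - l₂ • w, hu, ?_⟩ hpoly1
    have hcoef : (2*(α:ℂ)) - l₂ = l₁ := by rw [hl₁, hl₂]; ring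
    rw [mulVec_sub, mulVec_smul, mulVec_mulVec, key, smul_sub, smul_smul, hprod, one_smul,
      sub_right_comm, ← sub_smul, hcoef]

lemma aux_posDefHC {m : ℕ} {QC : Matrix (Fin m) (Fin m) ℂ} (hQ1 : QCᴴ * QC = 1)
    (hQ2 : QC * QCᴴ = 1) (hQspec : ∀ μ ∈ spectrum ℂ QC, 0 < μ.re) :
    ((2:ℂ)⁻¹ • (QC + QCᴴ)).PosDef := by
  have hH : ((2:ℂ)⁻¹ • (QC + QCᴴ)).IsHermitian := by
    unfold Matrix.IsHermitian
    rw [conjTranspose_smul, conjTranspose_add, conjTranspose_conjTranspose]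
    norm_num [add_comm]
  apply aux_posDefC hH
  intro i
  apply aux_eigHC hQ1 hQ2 hQspec (w := ⇑(hH.eigenvectorBasis i))
    (by simpa using hH.eigenvectorBasis.orthonormal.ne_zero i)
  have h := hH.mulVec_eigenvectorBasis i
  rw [h]
  ext j
  simp [Complex.real_smul]

theorem stmt6 (n : ℕ) (B Q : Matrix (Fin n) (Fin n) ℝ) (hB : B.PosDef)
    (hQ : Qᵀ * Q = 1)
    (hQspec : ∀ μ ∈ spectrum ℂ (Q.map Complex.ofReal), 0 < μ.re) :
    ∀ μ ∈ spectrum ℂ ((Q * B).map Complex.ofReal), 0 < μ.re := by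
  intro μ hμ
  have hco : ⇑Complex.ofRealHom = Complex.ofReal := rfl
  set QC := Q.map Complex.ofReal with hQCdef
  set BC := B.map Complex.ofReal with hBCdef
  have hQT : QCᴴ = Qᵀ.map Complex.ofReal := by
    ext i j
    simp [hQCdef, conjTranspose_apply]
  have hQ1 : QCᴴ * QC = 1 := by
    rw [hQT, hQCdef, ← hco, ← Matrix.map_mul, hQ]
    exact Matrix.map_one _ Complex.ofReal_zero Complex.ofReal_one
  have hQ2 : QC * QCᴴ = 1 := mul_eq_one_comm.mp hQ1
  have hmul : (Q * B).map Complex.ofReal = QC * BC := by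
    rw [hQCdef, hBCdef, ← hco, Matrix.map_mul]
  rw [hmul] at hμ
  obtain ⟨v, hv0, hv⟩ := (aux_memspec _ _).mp hμ
  have hBv : BC *ᵥ v = μ • (QCᴴ *ᵥ v) := by
    have h1 : QCᴴ *ᵥ ((QC * BC) *ᵥ v) = BC *ᵥ v := by
      rw [mulVec_mulVec, ← mul_assoc, hQ1, one_mul]
    have h2 : QCᴴ *ᵥ ((QC * BC) *ᵥ v) = μ • (QCᴴ *ᵥ v) := by
      rw [hv, mulVec_smul]
    rw [← h1, h2]
  set c := star v ⬝ᵥ (QCᴴ *ᵥ v) with hcdef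
  set r := star v ⬝ᵥ (BC *ᵥ v) with hrdef
  have hr : r = μ * c := by
    rw [hrdef, hBv, dotProduct_smul, smul_eq_mul, hcdef]
  have hrpos : 0 < r := (aux_posDefB hB).dotProduct_mulVec_pos hv0
  have hHC := aux_posDefHC hQ1 hQ2 hQspec
  have hHv : 0 < star v ⬝ᵥ (((2:ℂ)⁻¹ • (QC + QCᴴ)) *ᵥ v) := hHC.dotProduct_mulVec_pos hv0
  have hconj : (starRingEnd ℂ) c = star v ⬝ᵥ (QC *ᵥ v) := by
    rw [hcdef]
    calc (starRingEnd ℂ) (star v ⬝ᵥ (QCᴴ *ᵥ v))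
        = star (star v ⬝ᵥ (QCᴴ *ᵥ v)) := rfl
    _ = star (QCᴴ *ᵥ v) ⬝ᵥ v := (star_dotProduct _ _).symm
    _ = (star v ᵥ* QC) ⬝ᵥ v := by rw [star_mulVec, conjTranspose_conjTranspose]
    _ = star v ⬝ᵥ (QC *ᵥ v) := by rw [← dotProduct_mulVec]
  have hce : star v ⬝ᵥ (((2:ℂ)⁻¹ • (QC + QCᴴ)) *ᵥ v) = ((c.re : ℝ) : ℂ) := by
    rw [smul_mulVec, add_mulVec, dotProduct_smul, dotProduct_add, ← hconj, ← hcdef]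
    rw [smul_eq_mul]
    rw [add_comm ((starRingEnd ℂ) c) c, Complex.add_conj]
    push_cast
    ring
  rw [hce] at hHv
  have hcre : 0 < c.re := Complex.zero_lt_real.mp hHv
  rw [Complex.lt_def] at hrpos
  obtain ⟨hrre, hrim⟩ := hrpos
  simp only [Complex.zero_re, Complex.zero_im] at hrre hrim
  have h1 : r.re = μ.re * c.re - μ.im * c.im := by rw [hr, Complex.mul_re]
  have h2 : μ.re * c.im + μ.im * c.re = 0 := by
    have : r.im = μ.re * c.im + μ.im * c.re := by rw [hr, Complex.mul_im]
    rw [← hrim] at this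
    linarith [this]
  have hkey : r.re * c.re = μ.re * (c.re ^ 2 + c.im ^ 2) := by
    linear_combination c.re * h1 - c.im * h2
  nlinarith [mul_pos hrre hcre, sq_nonneg c.im, sq_nonneg c.re, hkey, hcre]
end
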